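/- arXiv:1003.1278 — 6 statements merged into one kernel-verified Lean document; each statement's English description precedes it below -/
import Mathlib

section
/- Let (\lambda_n)_{n \in \mathbb{Z}} be a strictly increasing sequence of reals with \lambda_{n+1} - \lambda_n \ge \pi for all n, and let (a_n) be a finitely supported sequence of complex numbers. Then for G(x) = \sum_n a_n H(x + \lambda_n), \int_{-\infty}^{\infty} |G'(x)|^2 dx = \int_{-\infty}^{\infty} |G(x)|^2 dx. -/
open MeasureTheory Real

noncomputable def H (x : ℝ) : ℝ := if |x| ≤ Real.pi / 2 then Real.cos x else 0

noncomputable def Hpow (M : ℕ) (x : ℝ) : ℝ :=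
  if M = 0 then (if |x| ≤ Real.pi / 2 then 1 else 0) else (H x) ^ M

noncomputable def HpowDeriv (M : ℕ) (x : ℝ) : ℝ :=
  if |x| ≤ Real.pi / 2 then -(M : ℝ) * Real.cos x ^ (M - 1) * Real.sin x else 0

noncomputable def Hderiv (x : ℝ) : ℝ := if |x| < Real.pi / 2 then -Real.sin x else 0

noncomputable def gM (M : ℕ) (l : ℝ) : ℝ := ∫ x : ℝ, Hpow M (x + l) * Hpow (M - 2) x

lemma H_ne_zero {x : ℝ} (hx : H x ≠ 0) : |x| < Real.pi / 2 := by
  unfold H at hx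
  split_ifs at hx with h
  · rcases lt_or_eq_of_le h with h' | h'
    · exact h'
    · exfalso
      rcases abs_eq (by positivity : (0:ℝ) ≤ Real.pi / 2) |>.mp h' with rfl | rfl
      · simp [Real.cos_pi_div_two] at hx
      · simp [Real.cos_pi_div_two] at hx
  · exact absurd rfl hx

lemma Hderiv_ne_zero {x : ℝ} (hx : Hderiv x ≠ 0) : |x| < Real.pi / 2 := by
  unfold Hderiv at hx
  split_ifs at hx with h
  · exact h
  · exact absurd rfl hx

lemma norm_sum_sq {s : Finset ℤ} (g : ℤ → ℂ)
    (h : ∀ i ∈ s, ∀ j ∈ s, i ≠ j → g i = 0 ∨ g j = 0) :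
    ‖∑ i ∈ s, g i‖ ^ 2 = ∑ i ∈ s, ‖g i‖ ^ 2 := by
  classical
  induction s using Finset.induction_on with
  | empty => simp
  | @insert b s hbs ih =>
    rw [Finset.sum_insert hbs, Finset.sum_insert hbs]
    by_cases hgb : g b = 0
    · rw [hgb]
      simpa using ih (fun i hi j hj hij =>
        h i (Finset.mem_insert_of_mem hi) j (Finset.mem_insert_of_mem hj) hij)
    · have hz : ∀ j ∈ s, g j = 0 := by
        intro j hj
        rcases h b (Finset.mem_insert_self b s) j (Finset.mem_insert_of_mem hj)
          (by rintro rfl; exact hbs hj) with h1 | h2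
        · exact absurd h1 hgb
        · exact h2
      rw [Finset.sum_eq_zero hz, Finset.sum_eq_zero (fun j hj => by simp [hz j hj])]
      simp

lemma main_aux (f : ℝ → ℝ) (hf : ∀ x, f x ≠ 0 → |x| < Real.pi / 2)
    (hint : Integrable (fun x => f x ^ 2))
    (hval : ∫ x : ℝ, f x ^ 2 = Real.pi / 2)
    (lam : ℤ → ℝ) (hmono : StrictMono lam)
    (hgap : ∀ n : ℤ, Real.pi ≤ lam (n + 1) - lam n)
    (a : ℤ → ℂ) (ha : (Function.support a).Finite) :
    ∫ x : ℝ, ‖∑ᶠ n : ℤ, a n * (f (x + lam n) : ℂ)‖ ^ 2 =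
      ∑ n ∈ ha.toFinset, ‖a n‖ ^ 2 * (Real.pi / 2) := by
  classical
  have hsep : ∀ m n : ℤ, m ≠ n → Real.pi ≤ |lam m - lam n| := by
    have key : ∀ m n : ℤ, m < n → Real.pi ≤ lam n - lam m := by
      intro m n hmn
      have h1 : lam (m + 1) ≤ lam n := hmono.monotone (by omega)
      have := hgap m
      linarith
    intro m n hmn
    have hπ := Real.pi_pos
    rcases lt_or_gt_of_ne hmn with h | h
    · rw [abs_sub_comm, abs_of_nonneg (by linarith [key m n h])]
      exact key m n h
    · rw [abs_of_nonneg (by linarith [key n m h])]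
      exact key n m h
  set s := ha.toFinset with hs
  have hsum : ∀ x : ℝ, (∑ᶠ n : ℤ, a n * (f (x + lam n) : ℂ)) =
      ∑ n ∈ s, a n * (f (x + lam n) : ℂ) := by
    intro x
    apply finsum_eq_sum_of_support_subset
    intro n hn
    simp only [Function.mem_support, ne_eq] at hn
    have : a n ≠ 0 := fun h => hn (by simp [h])
    simpa [hs] using this
  have hptwise : ∀ x : ℝ, ‖∑ᶠ n : ℤ, a n * (f (x + lam n) : ℂ)‖ ^ 2 =
      ∑ n ∈ s, ‖a n‖ ^ 2 * f (x + lam n) ^ 2 := by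
    intro x
    rw [hsum x, norm_sum_sq]
    · refine Finset.sum_congr rfl fun n _ => ?_
      rw [norm_mul, mul_pow, Complex.norm_real, Real.norm_eq_abs, sq_abs]
    · intro i _ j _ hij
      by_contra hcon
      push_neg at hcon
      obtain ⟨h1, h2⟩ := hcon
      have hf1 : f (x + lam i) ≠ 0 := fun h => h1 (by simp [h])
      have hf2 : f (x + lam j) ≠ 0 := fun h => h2 (by simp [h])
      have hi := hf _ hf1
      have hj := hf _ hf2
      have := hsep i j hij
      have : |lam i - lam j| < Real.pi := by
        have : |lam i - lam j| = |(x + lam i) - (x + lam j)| := by ring_nf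
        rw [this]
        calc |(x + lam i) - (x + lam j)| ≤ |x + lam i| + |x + lam j| := abs_sub _ _
          _ < Real.pi / 2 + Real.pi / 2 := by linarith
          _ = Real.pi := by ring
      linarith
  calc ∫ x : ℝ, ‖∑ᶠ n : ℤ, a n * (f (x + lam n) : ℂ)‖ ^ 2
      = ∫ x : ℝ, ∑ n ∈ s, ‖a n‖ ^ 2 * f (x + lam n) ^ 2 := by
        exact integral_congr_ae (Filter.Eventually.of_forall hptwise)
    _ = ∑ n ∈ s, ∫ x : ℝ, ‖a n‖ ^ 2 * f (x + lam n) ^ 2 := by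
        apply integral_finset_sum
        intro n _
        exact ((hint.comp_add_right (lam n)).const_mul _)
    _ = ∑ n ∈ s, ‖a n‖ ^ 2 * (Real.pi / 2) := by
        refine Finset.sum_congr rfl fun n _ => ?_
        rw [integral_const_mul, integral_add_right_eq_self (fun x => f x ^ 2) (lam n), hval]

lemma Hsq_indicator : (fun x : ℝ => H x ^ 2) =
    Set.indicator (Set.Icc (-(Real.pi/2)) (Real.pi/2)) (fun x => Real.cos x ^ 2) := by
  funext x
  simp only [H, Set.indicator, Set.mem_Icc, ← abs_le]
  split_ifs <;> simp

lemma Hderivsq_indicator : (fun x : ℝ => Hderiv x ^ 2) =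
    Set.indicator (Set.Ioo (-(Real.pi/2)) (Real.pi/2)) (fun x => Real.sin x ^ 2) := by
  funext x
  simp only [Hderiv, Set.indicator, Set.mem_Ioo, ← abs_lt]
  split_ifs <;> simp

lemma Hsq_int : Integrable (fun x : ℝ => H x ^ 2) := by
  rw [Hsq_indicator]
  exact (((Real.continuous_cos.pow 2).integrableOn_Icc)).integrable_indicator measurableSet_Icc

lemma Hderivsq_int : Integrable (fun x : ℝ => Hderiv x ^ 2) := by
  rw [Hderivsq_indicator]
  exact (((Real.continuous_sin.pow 2).integrableOn_Icc).mono_set Set.Ioo_subset_Icc_self).integrable_indicator measurableSet_Ioo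

lemma Hsq_val : ∫ x : ℝ, H x ^ 2 = Real.pi / 2 := by
  rw [Hsq_indicator, integral_indicator measurableSet_Icc,
    integral_Icc_eq_integral_Ioc, ← intervalIntegral.integral_of_le (by linarith [Real.pi_pos]),
    integral_cos_sq]
  simp [Real.cos_pi_div_two]
  try ring

lemma Hderivsq_val : ∫ x : ℝ, Hderiv x ^ 2 = Real.pi / 2 := by
  rw [Hderivsq_indicator, integral_indicator measurableSet_Ioo,
    ← integral_Ioc_eq_integral_Ioo, ← intervalIntegral.integral_of_le (by linarith [Real.pi_pos]),
    integral_sin_sq]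
  simp [Real.cos_pi_div_two]
  try ring

theorem stmt5 (lam : ℤ → ℝ) (hmono : StrictMono lam)
    (hgap : ∀ n : ℤ, Real.pi ≤ lam (n + 1) - lam n)
    (a : ℤ → ℂ) (ha : (Function.support a).Finite) :
    ∫ x : ℝ, ‖∑ᶠ n : ℤ, a n * (Hderiv (x + lam n) : ℂ)‖ ^ 2 =
      ∫ x : ℝ, ‖∑ᶠ n : ℤ, a n * (H (x + lam n) : ℂ)‖ ^ 2 := by
  rw [main_aux Hderiv (fun x => Hderiv_ne_zero) Hderivsq_int Hderivsq_val lam hmono hgap a ha,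
    main_aux H (fun x => H_ne_zero) Hsq_int Hsq_val lam hmono hgap a ha]
end

section
/- For all x with 0 \le x \le \pi, 32 g_3(x) = 12(\pi - x)\cos x + 9 \sin x + \sin(3x), where g_3(\lambda) = \int_{-\infty}^{\infty} H^3(x+\lambda) H(x) dx. -/
open MeasureTheory Real

lemma trig_id (a b : ℝ) :
    3/8 * Real.cos (2*b+a) + 3/8 * Real.cos a + 1/8 * Real.cos (4*b+3*a)
      + 1/8 * Real.cos (2*b+3*a) = Real.cos (b+a) ^ 3 * Real.cos b := by
  have h1 : 2*b+a = b+b+a := by ring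
  have h2 : 4*b+3*a = b+b+b+b+(a+a+a) := by ring
  have h3 : 2*b+3*a = b+b+(a+a+a) := by ring
  rw [h1, h2, h3]
  simp only [Real.cos_add, Real.sin_add]
  linear_combination
    (-(3/8*Real.cos a) - 7/8*Real.cos b^2*Real.cos a^3 - 3/8*Real.cos b^2*Real.sin a^2*Real.cos a
      + 3/2*Real.sin b*Real.cos b*Real.sin a*Real.cos a^2 + 1/2*Real.sin b*Real.cos b*Real.sin a^3
      + 1/8*Real.sin b^2*Real.cos a^3 - 3/8*Real.sin b^2*Real.sin a^2*Real.cos a)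
        * (Real.sin_sq_add_cos_sq b)
    + (-(3/4*Real.cos b^2*Real.cos a) + 3/4*Real.sin b*Real.cos b*Real.sin a)
        * (Real.sin_sq_add_cos_sq a)

theorem stmt9 (x : ℝ) (hx : x ∈ Set.Icc 0 Real.pi) :
    32 * gM 3 x = 12 * (Real.pi - x) * Real.cos x + 9 * Real.sin x + Real.sin (3 * x) := by
  obtain ⟨hx0, hxpi⟩ := hx
  have hpi := Real.pi_pos
  have hab : -(Real.pi/2) ≤ Real.pi/2 - x := by linarith
  -- Step 1: reduce the integral to an interval integral
  have key : ∀ y : ℝ, Hpow 3 (y + x) * Hpow (3-2) y =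
      Set.indicator (Set.Icc (-(Real.pi/2)) (Real.pi/2 - x))
        (fun y => Real.cos (y + x) ^ 3 * Real.cos y) y := by
    intro y
    simp only [Hpow, H, Set.indicator, Set.mem_Icc]
    norm_num
    by_cases hy : -(Real.pi/2) ≤ y ∧ y ≤ Real.pi/2 - x
    · obtain ⟨h1, h2⟩ := hy
      have hy1 : |y| ≤ Real.pi/2 := abs_le.2 ⟨by linarith, by linarith⟩
      have hy2 : |y + x| ≤ Real.pi/2 := abs_le.2 ⟨by linarith, by linarith⟩
      simp [hy1, hy2, h1, h2]
    · rw [if_neg hy]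
      push_neg at hy
      by_cases h1 : |y| ≤ Real.pi/2
      · have h1' := abs_le.1 h1
        have h2 := hy h1'.1
        have hy2 : ¬ |y + x| ≤ Real.pi/2 := by
          rw [abs_le]; push_neg; intro h; linarith
        simp [hy2]
      · simp [h1]
  have step1 : gM 3 x = ∫ y in (-(Real.pi/2))..(Real.pi/2 - x),
      Real.cos (y + x) ^ 3 * Real.cos y := by
    rw [gM]
    rw [MeasureTheory.integral_congr_ae (Filter.Eventually.of_forall key)]
    rw [MeasureTheory.integral_indicator measurableSet_Icc,
      MeasureTheory.integral_Icc_eq_integral_Ioc,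
      intervalIntegral.integral_of_le hab]
  -- Step 2: antiderivative
  set F : ℝ → ℝ := fun y => 3/16 * Real.sin (2*y+x) + 3/8 * y * Real.cos x
      + 1/32 * Real.sin (4*y+3*x) + 1/16 * Real.sin (2*y+3*x) with hF
  have hderiv : ∀ t ∈ Set.uIcc (-(Real.pi/2)) (Real.pi/2 - x),
      HasDerivAt F (Real.cos (t + x) ^ 3 * Real.cos t) t := by
    intro t _
    have d1 : HasDerivAt (fun y : ℝ => 2*y+x) 2 t := by
      simpa using ((hasDerivAt_id t).const_mul 2).add_const x
    have d2 : HasDerivAt (fun y : ℝ => 4*y+3*x) 4 t := by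
      simpa using ((hasDerivAt_id t).const_mul 4).add_const (3*x)
    have d3 : HasDerivAt (fun y : ℝ => 2*y+3*x) 2 t := by
      simpa using ((hasDerivAt_id t).const_mul 2).add_const (3*x)
    have d4 : HasDerivAt (fun y : ℝ => 3/8 * y * Real.cos x) (3/8 * Real.cos x) t := by
      simpa [mul_comm, mul_assoc] using
        (hasDerivAt_id t).const_mul (3/8 * Real.cos x)
    have := (((d1.sin.const_mul (3/16 : ℝ)).add d4).add
        (d2.sin.const_mul (1/32 : ℝ))).add (d3.sin.const_mul (1/16 : ℝ))
    refine this.congr_deriv ?_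
    rw [← trig_id x t]
    ring
  have hcont : IntervalIntegrable (fun y => Real.cos (y + x) ^ 3 * Real.cos y)
      MeasureTheory.volume (-(Real.pi/2)) (Real.pi/2 - x) := by
    apply Continuous.intervalIntegrable
    fun_prop
  have step2 := intervalIntegral.integral_eq_sub_of_hasDerivAt hderiv hcont
  rw [step1, step2, hF]
  simp only
  have e1 : 2*(Real.pi/2 - x)+x = Real.pi - x := by ring
  have e2 : 4*(Real.pi/2 - x)+3*x = 2*Real.pi - x := by ring
  have e3 : 2*(Real.pi/2 - x)+3*x = Real.pi + x := by ring
  have e4 : 2*(-(Real.pi/2))+x = x - Real.pi := by ring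
  have e5 : 4*(-(Real.pi/2))+3*x = 3*x - 2*Real.pi := by ring
  have e6 : 2*(-(Real.pi/2))+3*x = 3*x - Real.pi := by ring
  rw [e1, e2, e3, e4, e5, e6]
  simp only [Real.sin_add, Real.sin_sub, Real.sin_pi, Real.cos_pi,
    Real.sin_two_pi, Real.cos_two_pi]
  ring
end

section
/- Let g : \mathbb{R} \to \mathbb{R} be an even function, (\lambda_n)_{n \in \mathbb{Z}} a strictly increasing sequence of reals such that g(\lambda_m - \lambda_n) = 0 whenever |m - n| \ge 2, and (a_n) a finitely supported sequence of complex numbers. Then \sum_{m,n} g(\lambda_m - \lambda_n) a_m \overline{a_n} = \sum_n g(\lambda_{n+1} - \lambda_n) |a_n + a_{n+1}|^2 + \sum_n (g(0) - g(\lambda_n - \lambda_{n-1}) - g(\lambda_{n+1} - \lambda_n)) |a_n|^2. -/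
open MeasureTheory Real

theorem stmt12 (g : ℝ → ℝ) (heven : ∀ x, g (-x) = g x)
    (lam : ℤ → ℝ) (hmono : StrictMono lam)
    (hzero : ∀ m n : ℤ, 2 ≤ |m - n| → g (lam m - lam n) = 0)
    (a : ℤ → ℂ) (ha : (Function.support a).Finite) :
    ∑ᶠ m : ℤ, ∑ᶠ n : ℤ, (g (lam m - lam n) : ℂ) * (a m * starRingEnd ℂ (a n)) =
      (∑ᶠ n : ℤ, (g (lam (n + 1) - lam n) : ℂ) * (‖a n + a (n + 1)‖ ^ 2 : ℝ)) +
      ∑ᶠ n : ℤ, ((g 0 - g (lam n - lam (n - 1)) - g (lam (n + 1) - lam n) : ℝ) : ℂ)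
        * (‖a n‖ ^ 2 : ℝ) := by
  classical
  set c : ℤ → ℂ := fun n => starRingEnd ℂ (a n) with hcdef
  have hshift : ∀ k : ℤ, (Function.support fun n => a (n + k)).Finite := by
    intro k
    refine (ha.image (fun n => n - k)).subset ?_
    intro n hn
    exact ⟨n + k, hn, by ring⟩
  have hfin : ∀ (f : ℤ → ℂ) (k : ℤ), (∀ n, a (n + k) = 0 → f n = 0) →
      (Function.support f).Finite := by
    intro f k h
    refine (hshift k).subset fun n hn => ?_
    simp only [Function.mem_support] at *
    exact fun h0 => hn (h n h0)
  -- the elementary pieces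
  set t : ℤ → ℝ := fun n => g (lam (n + 1) - lam n) with htdef
  have hA : (Function.support fun m => (g (lam m - lam (m - 1)) : ℂ) * (a m * c m.pred)).Finite :=
    hfin _ 0 (fun n h => by rw [add_zero] at h; simp [h])
  have hB : (Function.support fun m => (g 0 : ℂ) * (a m * c m)).Finite :=
    hfin _ 0 (fun n h => by rw [add_zero] at h; simp [h])
  have hC : (Function.support fun m => (t m : ℂ) * (a m * c (m + 1))).Finite :=
    hfin _ 0 (fun n h => by rw [add_zero] at h; simp [h])
  have hP1 : (Function.support fun n => (t n : ℂ) * (a n * c n)).Finite :=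
    hfin _ 0 (fun n h => by rw [add_zero] at h; simp [h])
  have hP3 : (Function.support fun n => (t n : ℂ) * (a (n + 1) * c n)).Finite :=
    hfin _ 1 (fun n h => by simp [h])
  have hP4 : (Function.support fun n => (t n : ℂ) * (a (n + 1) * c (n + 1))).Finite :=
    hfin _ 1 (fun n h => by simp [h])
  have hQ : (Function.support fun n => (g (lam n - lam (n - 1)) : ℂ) * (a n * c n)).Finite :=
    hfin _ 0 (fun n h => by rw [add_zero] at h; simp [h])
  -- inner sum evaluation
  have hinner : ∀ m : ℤ, (∑ᶠ n : ℤ, (g (lam m - lam n) : ℂ) * (a m * c n)) =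
      (g (lam m - lam (m - 1)) : ℂ) * (a m * c (m - 1)) + (g 0 : ℂ) * (a m * c m)
        + (t m : ℂ) * (a m * c (m + 1)) := by
    intro m
    have hsupp : (Function.support fun n => (g (lam m - lam n) : ℂ) * (a m * c n)) ⊆
        ↑({m - 1, m, m + 1} : Finset ℤ) := by
      intro n hn
      by_contra hmem
      apply hn
      simp only [Finset.coe_insert, Set.mem_insert_iff, Finset.coe_singleton,
        Set.mem_singleton_iff] at hmem
      push_neg at hmem
      have : (2 : ℤ) ≤ |m - n| := by
        rcases abs_cases (m - n) with ⟨h, _⟩ | ⟨h, _⟩ <;> omega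
      simp [hzero m n this]
    rw [finsum_eq_sum_of_support_subset _ hsupp]
    rw [show ({m - 1, m, m + 1} : Finset ℤ) = insert (m - 1) (insert m {m + 1}) from rfl]
    rw [Finset.sum_insert (by simp; omega), Finset.sum_insert (by simp),
      Finset.sum_singleton]
    have h1 : lam m - lam m = 0 := sub_self _
    have h2 : g (lam m - lam (m + 1)) = t m := by
      rw [htdef]
      rw [show lam m - lam (m + 1) = -(lam (m + 1) - lam m) by ring, heven]
    rw [h1, h2, add_assoc]
  calc ∑ᶠ m : ℤ, ∑ᶠ n : ℤ, (g (lam m - lam n) : ℂ) * (a m * c n)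
      = ∑ᶠ m : ℤ, ((g (lam m - lam (m - 1)) : ℂ) * (a m * c (m - 1))
          + ((g 0 : ℂ) * (a m * c m) + (t m : ℂ) * (a m * c (m + 1)))) := by
        refine finsum_congr fun m => ?_
        rw [hinner m, add_assoc]
    _ = (∑ᶠ m : ℤ, (g (lam m - lam (m - 1)) : ℂ) * (a m * c (m - 1)))
          + ((∑ᶠ m : ℤ, (g 0 : ℂ) * (a m * c m)) + ∑ᶠ m : ℤ, (t m : ℂ) * (a m * c (m + 1))) := by
        rw [finsum_add_distrib (by exact hA) (hB.union hC |>.subset (Function.support_add _ _)),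
          finsum_add_distrib hB hC]
    _ = (∑ᶠ m : ℤ, (t m : ℂ) * (a (m + 1) * c m))
          + ((∑ᶠ m : ℤ, (g 0 : ℂ) * (a m * c m)) + ∑ᶠ m : ℤ, (t m : ℂ) * (a m * c (m + 1))) := by
        congr 1
        rw [← finsum_comp_equiv (Equiv.addRight (1 : ℤ))
          (f := fun m => (g (lam m - lam (m - 1)) : ℂ) * (a m * c (m - 1)))]
        refine finsum_congr fun m => ?_
        simp [htdef]
    _ = _ := ?_
  -- now handle the RHS
  have hnorm : ∀ z : ℂ, ((‖z‖ ^ 2 : ℝ) : ℂ) = z * starRingEnd ℂ z := by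
    intro z
    simp [Complex.mul_conj, Complex.normSq_eq_norm_sq]
  have hrhs1 : (∑ᶠ n : ℤ, (g (lam (n + 1) - lam n) : ℂ) * (‖a n + a (n + 1)‖ ^ 2 : ℝ))
      = (∑ᶠ n : ℤ, (t n : ℂ) * (a n * c n)) + ((∑ᶠ n : ℤ, (t n : ℂ) * (a n * c (n + 1)))
        + ((∑ᶠ n : ℤ, (t n : ℂ) * (a (n + 1) * c n))
          + ∑ᶠ n : ℤ, (t n : ℂ) * (a (n + 1) * c (n + 1)))) := by
    rw [← finsum_add_distrib hP3 hP4,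
      ← finsum_add_distrib hC ((hP3.union hP4).subset (Function.support_add _ _)),
      ← finsum_add_distrib hP1 ((hC.union ((hP3.union hP4).subset
        (Function.support_add _ _))).subset (Function.support_add _ _))]
    refine finsum_congr fun n => ?_
    rw [hnorm]
    simp only [map_add, hcdef]
    ring
  have hrhs2 : (∑ᶠ n : ℤ, ((g 0 - g (lam n - lam (n - 1)) - g (lam (n + 1) - lam n) : ℝ) : ℂ)
        * (‖a n‖ ^ 2 : ℝ))
      = (∑ᶠ n : ℤ, (g 0 : ℂ) * (a n * c n)) - (∑ᶠ n : ℤ, (g (lam n - lam (n - 1)) : ℂ) * (a n * c n))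
        - ∑ᶠ n : ℤ, (t n : ℂ) * (a n * c n) := by
    rw [← finsum_sub_distrib hB hQ,
      ← finsum_sub_distrib ((hB.union hQ).subset (Function.support_sub _ _)) hP1]
    refine finsum_congr fun n => ?_
    rw [hnorm]
    push_cast
    ring
  have hP4Q : (∑ᶠ n : ℤ, (t n : ℂ) * (a (n + 1) * c (n + 1)))
      = ∑ᶠ n : ℤ, (g (lam n - lam (n - 1)) : ℂ) * (a n * c n) := by
    rw [← finsum_comp_equiv (Equiv.subRight (1 : ℤ))
      (f := fun n => (t n : ℂ) * (a (n + 1) * c (n + 1)))]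
    refine finsum_congr fun n => ?_
    simp [htdef]
  rw [hrhs1, hrhs2, hP4Q]
  ring
end

section
/- If a \ge 0, b \ge 0 and a + b \ge \pi, then g_2(a) + g_2(b) \le g_2(0), where g_2(\lambda) = \int_{-\infty}^{\infty} H^2(x + \lambda) H^0(x) dx. -/
open MeasureTheory Real

lemma Hpow2_eq (y : ℝ) : Hpow 2 y = if |y| ≤ Real.pi / 2 then Real.cos y ^ 2 else 0 := by
  rw [Hpow, if_neg (by norm_num), H]
  split <;> simp

lemma Hpow0_eq (y : ℝ) : Hpow 0 y = if |y| ≤ Real.pi / 2 then (1:ℝ) else 0 := by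
  rw [Hpow, if_pos rfl]

lemma integrand_eq (l : ℝ) (hl0 : 0 ≤ l) :
    (fun x => Hpow 2 (x + l) * Hpow 0 x) =
      Set.indicator (Set.Icc (-(Real.pi/2)) (Real.pi/2 - l)) (fun x => Real.cos (x + l) ^ 2) := by
  funext x
  rw [Hpow2_eq, Hpow0_eq]
  by_cases h1 : |x + l| ≤ Real.pi / 2 <;> by_cases h2 : |x| ≤ Real.pi / 2 <;>
    simp only [h1, h2, if_true, if_false, mul_one, mul_zero, zero_mul]
  · rw [abs_le] at h1 h2
    rw [Set.indicator_of_mem (Set.mem_Icc.mpr ⟨h2.1, by linarith [h1.2]⟩)]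
  · rw [Set.indicator_of_notMem]
    intro hx
    rw [Set.mem_Icc] at hx
    exact h2 (abs_le.mpr ⟨hx.1, by linarith [hx.2]⟩)
  · rw [Set.indicator_of_notMem]
    intro hx
    rw [Set.mem_Icc] at hx
    rw [abs_le] at h2
    exact h1 (abs_le.mpr ⟨by linarith [h2.1], by linarith [hx.2]⟩)
  · rw [Set.indicator_of_notMem]
    intro hx
    rw [Set.mem_Icc] at hx
    exact h2 (abs_le.mpr ⟨hx.1, by linarith [hx.2]⟩)

lemma gM2_eq (l : ℝ) (h0 : 0 ≤ l) (h1 : l ≤ Real.pi) :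
    gM 2 l = (Real.pi - l + Real.sin l * Real.cos l) / 2 := by
  have hle : -(Real.pi/2) ≤ Real.pi/2 - l := by linarith
  have : gM 2 l = ∫ x : ℝ, Hpow 2 (x + l) * Hpow 0 x := rfl
  rw [this, integrand_eq l h0, MeasureTheory.integral_indicator measurableSet_Icc,
    MeasureTheory.integral_Icc_eq_integral_Ioc, ← intervalIntegral.integral_of_le hle,
    intervalIntegral.integral_comp_add_right (fun u => Real.cos u ^ 2),
    show -(Real.pi/2) + l = l - Real.pi/2 by ring,
    show Real.pi/2 - l + l = Real.pi/2 by ring, integral_cos_sq,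
    show l - Real.pi/2 = -(Real.pi/2 - l) by ring, Real.sin_neg, Real.cos_neg,
    Real.sin_pi_div_two_sub, Real.cos_pi_div_two_sub, Real.sin_pi_div_two,
    Real.cos_pi_div_two]
  ring

lemma gM2_zero {l : ℝ} (h : Real.pi ≤ l) : gM 2 l = 0 := by
  have hz : ∀ x : ℝ, Hpow 2 (x + l) * Hpow 0 x = 0 := by
    intro x
    simp only [Hpow, H]
    by_cases h1 : |x + l| ≤ Real.pi / 2 <;> by_cases h2 : |x| ≤ Real.pi / 2 <;>
      simp [h1, h2]
    rw [abs_le] at h1 h2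
    have hx : x + l = Real.pi / 2 := by linarith
    rw [hx, Real.cos_pi_div_two]
  have : gM 2 l = ∫ x : ℝ, Hpow 2 (x + l) * Hpow 0 x := rfl
  rw [this]
  simp [hz]

theorem stmt13 (a b : ℝ) (ha : 0 ≤ a) (hb : 0 ≤ b) (hab : Real.pi ≤ a + b) :
    gM 2 a + gM 2 b ≤ gM 2 0 := by
  have hpi := Real.pi_pos
  have h0 : gM 2 0 = Real.pi / 2 := by
    rw [gM2_eq 0 le_rfl (le_of_lt hpi)]; simp
  rw [h0]
  have key : ∀ x : ℝ, 0 ≤ x → x ≤ Real.pi → gM 2 x ≤ Real.pi / 2 := by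
    intro x hx0 hx1
    rw [gM2_eq x hx0 hx1]
    have hs : Real.sin x * Real.cos x ≤ x := by
      have h1 : Real.sin x ≤ x := Real.sin_le hx0
      have h2 : 0 ≤ Real.sin x := Real.sin_nonneg_of_nonneg_of_le_pi hx0 hx1
      nlinarith [Real.cos_le_one x, Real.neg_one_le_cos x]
    linarith
  by_cases hA : a ≤ Real.pi
  · by_cases hB : b ≤ Real.pi
    · rw [gM2_eq a ha hA, gM2_eq b hb hB]
      -- need sin a cos a + sin b cos b ≤ a + b - π
      have hid : Real.sin a * Real.cos a + Real.sin b * Real.cos b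
          = Real.sin (a + b) * Real.cos (a - b) := by
        rw [Real.sin_add, Real.cos_sub]
        linear_combination (-(Real.sin a * Real.cos a)) * Real.sin_sq_add_cos_sq b -
          (Real.sin b * Real.cos b) * Real.sin_sq_add_cos_sq a
      have hs : Real.sin (a + b - Real.pi) ≤ a + b - Real.pi :=
        Real.sin_le (by linarith)
      have hneg : Real.sin (a + b) ≤ 0 := by
        have := Real.sin_nonneg_of_nonneg_of_le_pi (x := a + b - Real.pi)
          (by linarith) (by linarith)
        rw [Real.sin_sub_pi] at this
        linarith
      have h2 : Real.sin (a + b) * Real.cos (a - b) ≤ a + b - Real.pi := by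
        have hc := Real.neg_one_le_cos (a - b)
        have hc2 := Real.cos_le_one (a - b)
        have : Real.sin (a + b) * Real.cos (a - b) ≤ -Real.sin (a + b) := by
          nlinarith
        have := Real.sin_sub_pi (a + b)
        nlinarith
      linarith [hid, h2]
    · rw [gM2_zero (le_of_not_ge hB)]
      have := key a ha hA
      linarith
  · rw [gM2_zero (le_of_not_ge hA)]
    by_cases hB : b ≤ Real.pi
    · have := key b hb hB; linarith
    · rw [gM2_zero (le_of_not_ge hB)]; linarith
end

section
/- Let (\lambda_n)_{n \in \mathbb{Z}} be a strictly increasing sequence of reals with \lambda_{n+2} - \lambda_n \ge \pi for all n, and let (a_n) be a finitely supported sequence of complex numbers. Then \sum_{m,n} g_2(\lambda_m - \lambda_n) a_m \overline{a_n} \ge 0, where g_2(\lambda) = \int_{-\infty}^{\infty} H^2(x+\lambda) H^0(x) dx. -/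
open MeasureTheory Real

lemma geval_nonneg_arg (l : ℝ) (h0 : 0 ≤ l) (h1 : l ≤ π) :
    gM 2 l = (π - l) / 2 + Real.sin l * Real.cos l / 2 := by
  have hpi := Real.pi_pos
  have key : (fun x : ℝ => Hpow 2 (x + l) * Hpow 0 x)
      = Set.indicator (Set.Icc (-(π/2)) (π/2 - l)) (fun x => Real.cos (x + l) ^ 2) := by
    funext x
    by_cases hx : x ∈ Set.Icc (-(π/2)) (π/2 - l)
    · rw [Set.indicator_of_mem hx]
      rw [Set.mem_Icc] at hx
      obtain ⟨hx1, hx2⟩ := hx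
      have h1' : |x| ≤ π/2 := abs_le.2 ⟨hx1, by linarith⟩
      have h2' : |x + l| ≤ π/2 := abs_le.2 ⟨by linarith, by linarith⟩
      simp [Hpow, H, h1', h2']
    · rw [Set.indicator_of_notMem hx]
      rw [Set.mem_Icc, not_and_or] at hx
      rcases hx with hx | hx
      · push_neg at hx
        have : ¬ |x| ≤ π/2 := by rw [abs_le]; push_neg; intro h; linarith
        simp [Hpow, this]
      · push_neg at hx
        have : ¬ |x + l| ≤ π/2 := by rw [abs_le]; push_neg; intro h; linarith
        simp [Hpow, H, this]
  rw [gM]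
  norm_num
  rw [key, MeasureTheory.integral_indicator measurableSet_Icc,
    MeasureTheory.integral_Icc_eq_integral_Ioc,
    ← intervalIntegral.integral_of_le (by linarith : -(π/2) ≤ π/2 - l),
    intervalIntegral.integral_comp_add_right (fun u => Real.cos u ^ 2) l,
    show π/2 - l + l = π/2 by ring, integral_cos_sq]
  have e1 : Real.sin (-(π/2) + l) = -Real.cos l := by
    rw [show -(π/2) + l = -(π/2 - l) by ring, Real.sin_neg, Real.sin_pi_div_two_sub]
  have e2 : Real.cos (-(π/2) + l) = Real.sin l := by
    rw [show -(π/2) + l = -(π/2 - l) by ring, Real.cos_neg, Real.cos_pi_div_two_sub]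
  rw [e1, e2, Real.cos_pi_div_two]
  ring

lemma geval_neg_arg (l : ℝ) (h0 : -π ≤ l) (h1 : l ≤ 0) :
    gM 2 l = (π + l) / 2 - Real.sin l * Real.cos l / 2 := by
  have hpi := Real.pi_pos
  have key : (fun x : ℝ => Hpow 2 (x + l) * Hpow 0 x)
      = Set.indicator (Set.Icc (-(π/2) - l) (π/2)) (fun x => Real.cos (x + l) ^ 2) := by
    funext x
    by_cases hx : x ∈ Set.Icc (-(π/2) - l) (π/2)
    · rw [Set.indicator_of_mem hx]
      rw [Set.mem_Icc] at hx
      obtain ⟨hx1, hx2⟩ := hx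
      have h1' : |x| ≤ π/2 := abs_le.2 ⟨by linarith, hx2⟩
      have h2' : |x + l| ≤ π/2 := abs_le.2 ⟨by linarith, by linarith⟩
      simp [Hpow, H, h1', h2']
    · rw [Set.indicator_of_notMem hx]
      rw [Set.mem_Icc, not_and_or] at hx
      rcases hx with hx | hx
      · push_neg at hx
        have : ¬ |x + l| ≤ π/2 := by rw [abs_le]; push_neg; intro h; linarith
        simp [Hpow, H, this]
      · push_neg at hx
        have : ¬ |x| ≤ π/2 := by rw [abs_le]; push_neg; intro h; linarith
        simp [Hpow, this]
  rw [gM]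
  norm_num
  rw [key, MeasureTheory.integral_indicator measurableSet_Icc,
    MeasureTheory.integral_Icc_eq_integral_Ioc,
    ← intervalIntegral.integral_of_le (by linarith : -(π/2) - l ≤ π/2),
    intervalIntegral.integral_comp_add_right (fun u => Real.cos u ^ 2) l,
    show -(π/2) - l + l = -(π/2) by ring, integral_cos_sq]
  have e1 : Real.sin (π/2 + l) = Real.cos l := by
    rw [show π/2 + l = π/2 - (-l) by ring, Real.sin_pi_div_two_sub, Real.cos_neg]
  have e2 : Real.cos (π/2 + l) = -Real.sin l := by
    rw [show π/2 + l = π/2 - (-l) by ring, Real.cos_pi_div_two_sub, Real.sin_neg]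
  rw [e1, e2, Real.cos_neg, Real.cos_pi_div_two]
  ring

lemma gzero (l : ℝ) (h : π ≤ |l|) : gM 2 l = 0 := by
  have key : (fun x : ℝ => Hpow 2 (x + l) * Hpow 0 x) = fun _ => (0:ℝ) := by
    funext x
    by_cases h1 : |x| ≤ π/2
    · by_cases h2 : |x + l| ≤ π/2
      · have : |x + l| = π/2 := by
          have h4 : |l| ≤ |x + l| + |x| := by
            have hl : l = (x + l) + (-x) := by ring
            calc |l| = |(x + l) + (-x)| := by rw [← hl]
            _ ≤ |x + l| + |-x| := abs_add_le _ _
            _ = |x + l| + |x| := by rw [abs_neg]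
          linarith
        have hc : Real.cos (x + l) = 0 := by
          rcases abs_eq (by positivity : (0:ℝ) ≤ π/2) |>.1 this with h | h
          · rw [h, Real.cos_pi_div_two]
          · rw [h, Real.cos_neg, Real.cos_pi_div_two]
        simp [Hpow, H, h2, hc]
      · simp [Hpow, H, h2]
    · simp [Hpow, h1]
  rw [gM]
  norm_num
  rw [key]
  simp

lemma gnonneg (l : ℝ) : 0 ≤ gM 2 l := by
  rw [gM]
  apply MeasureTheory.integral_nonneg
  intro x
  apply mul_nonneg
  · simp only [Hpow]; norm_num; positivity
  · simp only [Hpow]; norm_num; split <;> norm_num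

lemma gsymm (l : ℝ) : gM 2 (-l) = gM 2 l := by
  rcases le_or_gt |l| π with h | h
  · rcases le_or_gt 0 l with h0 | h0
    · rw [abs_of_nonneg h0] at h
      rw [geval_neg_arg (-l) (by linarith) (by linarith),
        geval_nonneg_arg l h0 h, Real.sin_neg, Real.cos_neg]
      ring
    · rw [abs_of_neg h0] at h
      rw [geval_nonneg_arg (-l) (by linarith) (by linarith),
        geval_neg_arg l (by linarith) h0.le, Real.sin_neg, Real.cos_neg]
      ring
  · rw [gzero l h.le, gzero (-l) (by rw [abs_neg]; exact h.le)]

lemma gM_zero_val : gM 2 0 = π / 2 := by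
  rw [geval_nonneg_arg 0 le_rfl Real.pi_pos.le]
  simp

lemma keyineq (d d' : ℝ) (hd : 0 < d) (hd' : 0 < d') (hs : π ≤ d + d') :
    gM 2 d + gM 2 d' ≤ π / 2 := by
  have hpi := Real.pi_pos
  have single : ∀ x : ℝ, 0 < x → gM 2 x ≤ π / 2 := by
    intro x hx
    rcases le_or_gt π x with h | h
    · rw [gzero x (by rw [abs_of_pos hx]; exact h)]; linarith
    · rw [geval_nonneg_arg x hx.le h.le]
      have h1 : Real.sin x ≤ x := Real.sin_le hx.le
      have h2 : Real.sin x * Real.cos x ≤ x := by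
        nlinarith [Real.cos_le_one x, Real.sin_nonneg_of_nonneg_of_le_pi hx.le h.le,
          Real.neg_one_le_cos x]
      linarith
  rcases le_or_gt π d with h | h
  · rw [gzero d (by rw [abs_of_pos hd]; exact h)]
    simpa using single d' hd'
  rcases le_or_gt π d' with h' | h'
  · rw [gzero d' (by rw [abs_of_pos hd']; exact h')]
    simpa using single d hd
  -- main case: 0 < d, d' < π, π ≤ d + d' < 2π
  rw [geval_nonneg_arg d hd.le h.le, geval_nonneg_arg d' hd'.le h'.le]
  -- reduces to sin d cos d + sin d' cos d' ≤ d + d' - π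
  have key : Real.sin d * Real.cos d + Real.sin d' * Real.cos d'
      ≤ d + d' - π := by
    have prod : Real.sin d * Real.cos d + Real.sin d' * Real.cos d'
        = Real.sin (d + d') * Real.cos (d - d') := by
      rw [Real.sin_add, Real.cos_sub]
      linear_combination (-(Real.sin d * Real.cos d)) * (Real.sin_sq_add_cos_sq d')
        + (-(Real.sin d' * Real.cos d')) * (Real.sin_sq_add_cos_sq d)
    have hsub : Real.sin (d + d' - π) = -Real.sin (d + d') := Real.sin_sub_pi _
    have hge : 0 ≤ Real.sin (d + d' - π) :=
      Real.sin_nonneg_of_nonneg_of_le_pi (by linarith) (by linarith)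
    have hle : Real.sin (d + d' - π) ≤ d + d' - π := Real.sin_le (by linarith)
    have hcos : -1 ≤ Real.cos (d - d') := Real.neg_one_le_cos _
    have hsinle : Real.sin (d + d') ≤ 0 := by linarith
    nlinarith [Real.cos_le_one (d - d')]
  linarith

theorem stmt16 (lam : ℤ → ℝ) (hmono : StrictMono lam)
    (hgap : ∀ n : ℤ, Real.pi ≤ lam (n + 2) - lam n)
    (a : ℤ → ℂ) (ha : (Function.support a).Finite) :
    0 ≤ ∑ᶠ m : ℤ, ∑ᶠ n : ℤ, gM 2 (lam m - lam n) * (a m * starRingEnd ℂ (a n)).re := by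
  classical
  obtain ⟨B, hB0, hB⟩ : ∃ B : ℤ, 0 ≤ B ∧ ∀ m : ℤ, a m ≠ 0 → |m| ≤ B := by
    refine ⟨(ha.toFinset.sup (fun m => m.natAbs) : ℕ), by positivity, fun m hm => ?_⟩
    have hmem : m ∈ ha.toFinset := ha.mem_toFinset.2 hm
    have hle := Finset.le_sup (f := fun m : ℤ => m.natAbs) hmem
    rw [Int.abs_eq_natAbs]
    exact_mod_cast hle
  have hvan : ∀ m : ℤ, B + 1 ≤ |m| → a m = 0 := by
    intro m hm
    by_contra hne
    have := hB m hne
    omega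
  set T : Finset ℤ := Finset.Icc (-B-1) (B+1) with hT
  set r : ℤ → ℤ → ℝ := fun m n => (a m * starRingEnd ℂ (a n)).re with hr
  set f : ℤ → ℤ → ℝ := fun m n => gM 2 (lam m - lam n) * r m n with hf
  set e : ℤ → ℝ := fun m => gM 2 (lam (m+1) - lam m) with he
  have hr0 : ∀ m n, a n = 0 → r m n = 0 := by intro m n h; simp [hr, h]
  have hr0' : ∀ m n, a m = 0 → r m n = 0 := by intro m n h; simp [hr, h]
  have rsymm : ∀ m n, r m n = r n m := by
    intro m n
    have : a m * (starRingEnd ℂ) (a n) = (starRingEnd ℂ) (a n * (starRingEnd ℂ) (a m)) := by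
      rw [map_mul, Complex.conj_conj, mul_comm]
    simp only [hr, this, Complex.conj_re]
  have rdiag : ∀ m, 0 ≤ r m m := by
    intro m
    simp only [hr, Complex.mul_conj]
    simp [Complex.normSq_nonneg]
  -- step 1 : reduce finsum to finset sums over T
  have step1 : (∑ᶠ m : ℤ, ∑ᶠ n : ℤ, f m n) = ∑ m ∈ T, ∑ n ∈ T, f m n := by
    have inner : ∀ m : ℤ, (∑ᶠ n : ℤ, f m n) = ∑ n ∈ T, f m n := by
      intro m
      apply finsum_eq_sum_of_support_subset
      intro n hn
      simp only [Function.mem_support, hf] at hn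
      have han : a n ≠ 0 := by
        intro h0
        exact hn (by rw [hr0 m n h0, mul_zero])
      have := hB n han
      simp only [hT, Finset.coe_Icc, Set.mem_Icc]
      constructor <;> [skip; skip] <;> cases' abs_le.1 this with h1 h2 <;> omega
    rw [finsum_congr inner]
    apply finsum_eq_sum_of_support_subset
    intro m hm
    simp only [Function.mem_support] at hm
    have ham : a m ≠ 0 := by
      intro h0
      apply hm
      apply Finset.sum_eq_zero
      intro n _
      rw [hf]; simp only []
      rw [hr0' m n h0, mul_zero]
    have := hB m ham
    simp only [hT, Finset.coe_Icc, Set.mem_Icc]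
    cases' abs_le.1 this with h1 h2
    omega
  -- vanishing of the kernel at distance ≥ 2
  have hK0 : ∀ m n : ℤ, 2 ≤ |m - n| → gM 2 (lam m - lam n) = 0 := by
    intro m n h
    apply gzero
    rcases le_abs.1 h with hmn | hmn
    · have h1 : n + 2 ≤ m := by omega
      have h2 : lam (n + 2) ≤ lam m := hmono.monotone h1
      have := hgap n
      have : π ≤ lam m - lam n := by linarith
      exact this.trans (le_abs_self _)
    · have h1 : m + 2 ≤ n := by omega
      have h2 : lam (m + 2) ≤ lam n := hmono.monotone h1
      have := hgap m
      have : π ≤ -(lam m - lam n) := by linarith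
      exact this.trans (neg_le_abs _)
  -- step 2 : each row reduces to three terms
  have step2 : ∀ m : ℤ, ∑ n ∈ T, f m n = f m (m-1) + f m m + f m (m+1) := by
    intro m
    have h1 : ∑ n ∈ T, f m n = ∑ n ∈ T ∪ {m-1, m, m+1}, f m n := by
      apply Finset.sum_subset Finset.subset_union_left
      intro n _ hnT
      simp only [hT, Finset.mem_Icc, not_and_or, not_le] at hnT
      have : a n = 0 := by
        apply hvan
        rcases hnT with h | h <;> [rw [abs_of_neg (by omega : n < 0)]; rw [abs_of_pos (by omega : 0 < n)]] <;> omega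
      rw [hf]; simp only []
      rw [hr0 m n this, mul_zero]
    have h2 : ∑ n ∈ ({m-1, m, m+1} : Finset ℤ), f m n = ∑ n ∈ T ∪ {m-1, m, m+1}, f m n := by
      apply Finset.sum_subset Finset.subset_union_right
      intro n _ hn3
      simp only [Finset.mem_insert, Finset.mem_singleton] at hn3
      push_neg at hn3
      rw [hf]; simp only []
      rw [hK0 m n (by rw [le_abs]; omega), zero_mul]
    rw [h1, ← h2]
    rw [show ({m-1, m, m+1} : Finset ℤ) = insert (m-1) (insert m {m+1}) from rfl,
      Finset.sum_insert (by simp only [Finset.mem_insert, Finset.mem_singleton]; omega),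
      Finset.sum_insert (by simp only [Finset.mem_singleton]; omega),
      Finset.sum_singleton]
    ring
  -- telescoping lemma
  have tele : ∀ (φ : ℤ → ℝ) (c d : ℤ), c - 1 ≤ d →
      ∑ m ∈ Finset.Icc c d, (φ m - φ (m-1)) = φ d - φ (c-1) := by
    intro φ c d hcd
    refine Int.le_induction
      (motive := fun d _ => ∑ m ∈ Finset.Icc c d, (φ m - φ (m-1)) = φ d - φ (c-1)) ?_ ?_ d hcd
    · show ∑ m ∈ Finset.Icc c (c-1), (φ m - φ (m-1)) = φ (c-1) - φ (c-1)
      rw [Finset.Icc_eq_empty (by omega)]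
      simp
    · intro n hn ih
      rw [show Finset.Icc c (n+1) = insert (n+1) (Finset.Icc c n) from by
          ext x; simp only [Finset.mem_Icc, Finset.mem_insert]; omega,
        Finset.sum_insert (by simp only [Finset.mem_Icc]; omega), ih]
      ring
  set φ : ℤ → ℝ := fun m => e m * (r (m+1) m + r (m+1) (m+1)) with hphi
  have per_m : ∀ m : ℤ,
      (e m * ((a m + a (m+1)) * starRingEnd ℂ (a m + a (m+1))).re
        + (π/2 - e (m-1) - e m) * r m m)
      - (f m (m-1) + f m m + f m (m+1)) = φ m - φ (m-1) := by
    intro m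
    have hfm : f m m = (π/2) * r m m := by
      show gM 2 (lam m - lam m) * r m m = _
      rw [sub_self, gM_zero_val]
    have hfp : f m (m+1) = e m * r m (m+1) := by
      show gM 2 (lam m - lam (m+1)) * r m (m+1) = _
      rw [show lam m - lam (m+1) = -(lam (m+1) - lam m) by ring, gsymm]
    have hfm1 : f m (m-1) = e (m-1) * r m (m-1) := by
      show gM 2 (lam m - lam (m-1)) * r m (m-1) = gM 2 (lam (m-1+1) - lam (m-1)) * r m (m-1)
      rw [show (m : ℤ) - 1 + 1 = m by ring]
    have hexp : ((a m + a (m+1)) * starRingEnd ℂ (a m + a (m+1))).re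
        = r m m + r m (m+1) + r (m+1) m + r (m+1) (m+1) := by
      simp only [hr, map_add, mul_add, add_mul, Complex.add_re]
      ring
    have hphim1 : φ (m-1) = e (m-1) * (r m (m-1) + r m m) := by
      show e (m-1) * (r (m-1+1) (m-1) + r (m-1+1) (m-1+1)) = _
      rw [show (m : ℤ) - 1 + 1 = m by ring]
    have hphim : φ m = e m * (r m (m+1) + r (m+1) (m+1)) := by
      show e m * (r (m+1) m + r (m+1) (m+1)) = _
      rw [rsymm (m+1) m]
    rw [hfm, hfp, hfm1, hexp, hphim1, hphim, rsymm (m+1) m]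
    ring
  have goal_eq : (∑ᶠ m : ℤ, ∑ᶠ n : ℤ, gM 2 (lam m - lam n) * (a m * starRingEnd ℂ (a n)).re)
      = ∑ᶠ m : ℤ, ∑ᶠ n : ℤ, f m n := rfl
  rw [goal_eq, step1]
  have S2 : ∑ m ∈ T, ∑ n ∈ T, f m n = ∑ m ∈ T, (f m (m-1) + f m m + f m (m+1)) :=
    Finset.sum_congr rfl (fun m _ => step2 m)
  rw [S2]
  have hsum : (∑ m ∈ T, (e m * ((a m + a (m+1)) * starRingEnd ℂ (a m + a (m+1))).re
        + (π/2 - e (m-1) - e m) * r m m))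
      - ∑ m ∈ T, (f m (m-1) + f m m + f m (m+1)) = ∑ m ∈ T, (φ m - φ (m-1)) := by
    rw [← Finset.sum_sub_distrib]
    exact Finset.sum_congr rfl (fun m _ => per_m m)
  have htel : ∑ m ∈ T, (φ m - φ (m-1)) = φ (B+1) - φ (-B-1-1) := by
    rw [hT]; exact tele φ _ _ (by omega)
  have hphiB : φ (B+1) = 0 := by
    have hz : a (B+1+1) = 0 := hvan _ (by rw [abs_of_nonneg (by omega : (0:ℤ) ≤ B+1+1)]; omega)
    show e (B+1) * (r (B+1+1) (B+1) + r (B+1+1) (B+1+1)) = 0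
    rw [hr0' _ _ hz, hr0' _ _ hz]
    ring
  have hphiB' : φ (-B-1-1) = 0 := by
    have hz : a (-B-1-1+1) = 0 := by
      apply hvan
      rw [show (-B-1-1+1 : ℤ) = -(B+1) by ring, abs_neg,
        abs_of_nonneg (by omega : (0:ℤ) ≤ B+1)]
    show e (-B-1-1) * (r (-B-1-1+1) (-B-1-1) + r (-B-1-1+1) (-B-1-1+1)) = 0
    rw [hr0' _ _ hz, hr0' _ _ hz]
    ring
  have hge : 0 ≤ ∑ m ∈ T, (e m * ((a m + a (m+1)) * starRingEnd ℂ (a m + a (m+1))).re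
        + (π/2 - e (m-1) - e m) * r m m) := by
    apply Finset.sum_nonneg
    intro m _
    apply add_nonneg
    · apply mul_nonneg (gnonneg _)
      rw [Complex.mul_conj]
      simp [Complex.normSq_nonneg]
    · apply mul_nonneg _ (rdiag m)
      have h1 : 0 < lam m - lam (m-1) := sub_pos.2 (hmono (by omega))
      have h2 : 0 < lam (m+1) - lam m := sub_pos.2 (hmono (by omega))
      have h3 := hgap (m-1)
      rw [show (m : ℤ) - 1 + 2 = m + 1 by ring] at h3
      have hki := keyineq (lam m - lam (m-1)) (lam (m+1) - lam m) h1 h2 (by linarith)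
      have heq : e (m-1) = gM 2 (lam m - lam (m-1)) := by
        show gM 2 (lam (m-1+1) - lam (m-1)) = _
        rw [show (m : ℤ) - 1 + 1 = m by ring]
      have heq2 : e m = gM 2 (lam (m+1) - lam m) := rfl
      rw [heq, heq2]
      linarith
  linarith [hsum, htel, hphiB, hphiB', hge]
end

section
/- Let (\lambda_n)_{n \in \mathbb{Z}} be a strictly increasing sequence of reals with \lambda_{n+2} - \lambda_n \ge \pi for all n, (a_n) a finitely supported sequence of complex numbers, and G(x) = \sum_n a_n H^2(x + \lambda_n). Then \int_{-\infty}^{\infty} |G'(x)|^2 dx \le 4 \int_{-\infty}^{\infty} |G(x)|^2 dx. -/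
open MeasureTheory Real

lemma hpow2_eq (x : ℝ) : Hpow 2 x = if |x| ≤ Real.pi / 2 then Real.cos x ^ 2 else 0 := by
  simp only [Hpow, H]
  split <;> simp_all

lemma hpd2_eq (x : ℝ) :
    HpowDeriv 2 x = if |x| ≤ Real.pi / 2 then -(2 * Real.cos x * Real.sin x) else 0 := by
  simp only [HpowDeriv]
  split <;> [skip; rfl]
  ring_nf

lemma cos_eq_zero_of_abs (x : ℝ) (h : |x| = Real.pi / 2) : Real.cos x = 0 := by
  rcases abs_eq (by positivity) |>.mp h with h' | h' <;> rw [h'] <;> simp [Real.cos_pi_div_two]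

lemma cont_hpow2 : Continuous (Hpow 2) := by
  have : Continuous H := by
    unfold H
    apply Continuous.if_le continuous_cos continuous_const (continuous_abs) continuous_const
    intro x hx
    exact cos_eq_zero_of_abs x hx
  exact (this.pow 2).congr (fun x => by simp [Hpow])

lemma cont_hpd2 : Continuous (HpowDeriv 2) := by
  have : (fun x => HpowDeriv 2 x) = fun x => if |x| ≤ Real.pi / 2 then -(2 * Real.cos x * Real.sin x) else 0 := funext hpd2_eq
  rw [show HpowDeriv 2 = fun x => HpowDeriv 2 x from rfl, this]
  apply Continuous.if_le (by continuity) continuous_const continuous_abs continuous_const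
  intro x hx
  simp [cos_eq_zero_of_abs x hx]

lemma hpow2_zero {x : ℝ} (h : ¬ |x| ≤ Real.pi / 2) : Hpow 2 x = 0 := by
  rw [hpow2_eq]; simp [h]

lemma hpd2_zero {x : ℝ} (h : ¬ |x| ≤ Real.pi / 2) : HpowDeriv 2 x = 0 := by
  rw [hpd2_eq]; simp [h]

lemma hcs_hpow2 : HasCompactSupport (Hpow 2) :=
  HasCompactSupport.intro (isCompact_Icc (a := -(Real.pi/2)) (b := Real.pi/2))
    (fun x hx => hpow2_zero (by simpa [Set.mem_Icc, abs_le] using hx))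

lemma hcs_hpd2 : HasCompactSupport (HpowDeriv 2) :=
  HasCompactSupport.intro (isCompact_Icc (a := -(Real.pi/2)) (b := Real.pi/2))
    (fun x hx => hpd2_zero (by simpa [Set.mem_Icc, abs_le] using hx))

lemma int_prod (f g : ℝ → ℝ) (hf : Continuous f) (hg : Continuous g)
    (hcf : HasCompactSupport f) (c d : ℝ) :
    Integrable (fun x => f (x + c) * g (x + d)) := by
  apply Continuous.integrable_of_hasCompactSupport
  · exact (hf.comp (continuous_id.add continuous_const)).mul (hg.comp (continuous_id.add continuous_const))
  · have h1 : HasCompactSupport fun x => f (x + c) := hcf.comp_homeomorph (Homeomorph.addRight c)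
    exact h1.mul_right

noncomputable def kfun (t : ℝ) : ℝ := Real.pi - t + Real.sin (2*t)/2

lemma kfun_anti : Antitone kfun := by
  intro x y hxy
  unfold kfun
  have h : Real.sin (2*y) - Real.sin (2*x) = 2 * Real.sin (y - x) * Real.cos (y + x) := by
    rw [Real.sin_sub_sin, show (2*y-2*x)/2 = y - x by ring, show (2*y+2*x)/2 = y + x by ring]
  have hs : |Real.sin (y - x)| ≤ y - x := by
    have := Real.abs_sin_le_abs (x := y - x)
    rwa [abs_of_nonneg (by linarith : (0:ℝ) ≤ y - x)] at this
  have hc : |Real.cos (y + x)| ≤ 1 := Real.abs_cos_le_one _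
  have key : Real.sin (2*y) - Real.sin (2*x) ≤ 2 * (y - x) := by
    calc Real.sin (2*y) - Real.sin (2*x) ≤ |2 * Real.sin (y - x) * Real.cos (y + x)| := by
          rw [h]; exact le_abs_self _
      _ = 2 * |Real.sin (y-x)| * |Real.cos (y+x)| := by rw [abs_mul, abs_mul, abs_two]
      _ ≤ 2 * (y - x) * 1 := by nlinarith [abs_nonneg (Real.sin (y-x)), abs_nonneg (Real.cos (y+x))]
      _ = 2 * (y - x) := by ring
  linarith

lemma kfun_zero : kfun 0 = Real.pi := by simp [kfun]

lemma kfun_pi : kfun Real.pi = 0 := by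
  unfold kfun; rw [Real.sin_two_pi]; ring

lemma kfun_reflect (d : ℝ) : kfun (Real.pi - d) = Real.pi - kfun d := by
  unfold kfun
  have : Real.sin (2*(Real.pi - d)) = - Real.sin (2*d) := by
    rw [show 2*(Real.pi - d) = -(2*d) + 2*Real.pi by ring, Real.sin_add_two_pi, Real.sin_neg]
  rw [this]; ring

lemma kfun_nonneg {t : ℝ} (h : t ≤ Real.pi) : 0 ≤ kfun t := by
  have := kfun_anti h
  rw [kfun_pi] at this; linarith

lemma kfun_le_pi {t : ℝ} (h : 0 ≤ t) : kfun t ≤ Real.pi := by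
  have := kfun_anti h
  rwa [kfun_zero] at this

noncomputable def KI (t : ℝ) : ℝ := ∫ x : ℝ, Hpow 2 (x + t) * Hpow 2 x
noncomputable def KJ (t : ℝ) : ℝ := ∫ x : ℝ, HpowDeriv 2 (x + t) * HpowDeriv 2 x
noncomputable def Kk (t : ℝ) : ℝ := 4 * KI t - KJ t

lemma pi_half_pos : (0:ℝ) < Real.pi / 2 := by positivity

-- big computation : for 0 ≤ t < π
lemma KI_eq {t : ℝ} (h0 : 0 ≤ t) (h1 : t < Real.pi) :
    KI t = (Real.pi - t)/4 + 3*Real.sin (2*t)/16 + (Real.pi - t)*Real.cos (2*t)/8 := by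
  have hsupp : Function.support (fun x => Hpow 2 (x + t) * Hpow 2 x)
      ⊆ Set.Ioc (-(Real.pi/2)) (Real.pi/2 - t) := by
    intro x hx
    simp only [Function.mem_support, ne_eq] at hx
    by_cases hx1 : |x| ≤ Real.pi/2
    · by_cases hx2 : |x + t| ≤ Real.pi/2
      · constructor
        · rcases lt_or_eq_of_le (abs_le.mp hx1).1 with h | h
          · exact h
          · exfalso; apply hx
            rw [hpow2_eq x, if_pos hx1, ← h]
            simp [Real.cos_pi_div_two]
        · linarith [(abs_le.mp hx2).2]
      · exact absurd (by rw [hpow2_zero hx2, zero_mul]) hx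
    · exact absurd (by rw [hpow2_zero hx1, mul_zero]) hx
  rw [KI, ← intervalIntegral.integral_eq_integral_of_support_subset hsupp]
  have hab : -(Real.pi/2) ≤ Real.pi/2 - t := by linarith
  have hcong : ∀ x ∈ Set.uIcc (-(Real.pi/2)) (Real.pi/2 - t),
      Hpow 2 (x + t) * Hpow 2 x = Real.cos (x+t)^2 * Real.cos x^2 := by
    intro x hx
    rw [Set.uIcc_of_le hab] at hx
    obtain ⟨hxl, hxr⟩ := hx
    have h1 : |x| ≤ Real.pi/2 := abs_le.mpr ⟨by linarith, by linarith⟩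
    have h2 : |x + t| ≤ Real.pi/2 := abs_le.mpr ⟨by linarith, by linarith⟩
    rw [hpow2_eq, hpow2_eq, if_pos h1, if_pos h2]
  rw [intervalIntegral.integral_congr hcong]
  have hderiv : ∀ x ∈ Set.uIcc (-(Real.pi/2)) (Real.pi/2 - t),
      HasDerivAt (fun x : ℝ => x/4 + Real.sin (2*x)/8 + Real.sin (2*x+2*t)/8
        + Real.sin (4*x+2*t)/32 + x * Real.cos (2*t)/8)
      (Real.cos (x+t) ^ 2 * Real.cos x ^ 2) x := by
    intro x _
    have h1 : HasDerivAt (fun x : ℝ => x/4) (1/4) x := (hasDerivAt_id x).div_const 4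
    have h2 : HasDerivAt (fun x : ℝ => Real.sin (2*x)/8) (2 * Real.cos (2*x)/8) x := by
      have := ((Real.hasDerivAt_sin (2*x)).comp x ((hasDerivAt_id x).const_mul 2)).div_const 8
      simpa [mul_comm] using this
    have h3 : HasDerivAt (fun x : ℝ => Real.sin (2*x+2*t)/8) (2 * Real.cos (2*x+2*t)/8) x := by
      have hin : HasDerivAt (fun x : ℝ => 2*x+2*t) 2 x := by
        simpa using ((hasDerivAt_id x).const_mul 2).add_const (2*t)
      have := ((Real.hasDerivAt_sin (2*x+2*t)).comp x hin).div_const 8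
      simpa [mul_comm] using this
    have h4 : HasDerivAt (fun x : ℝ => Real.sin (4*x+2*t)/32) (4 * Real.cos (4*x+2*t)/32) x := by
      have hin : HasDerivAt (fun x : ℝ => 4*x+2*t) 4 x := by
        simpa using ((hasDerivAt_id x).const_mul 4).add_const (2*t)
      have := ((Real.hasDerivAt_sin (4*x+2*t)).comp x hin).div_const 32
      simpa [mul_comm] using this
    have h5 : HasDerivAt (fun x : ℝ => x * Real.cos (2*t)/8) (Real.cos (2*t)/8) x := by
      simpa using (((hasDerivAt_id x).mul_const (Real.cos (2*t))).div_const 8)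
    have H := (((h1.add h2).add h3).add h4).add h5
    refine H.congr_deriv ?_
    have e1 : Real.cos (2*x) = 2 * Real.cos x ^ 2 - 1 := by rw [Real.cos_two_mul]
    have e2 : Real.cos (2*x+2*t) = 2 * Real.cos (x+t) ^ 2 - 1 := by
      rw [show 2*x+2*t = 2*(x+t) by ring, Real.cos_two_mul]
    have e3 : Real.cos (4*x+2*t) = (2 * Real.cos (x+t)^2 - 1) * (2 * Real.cos x ^2 - 1)
        - (2 * Real.sin (x+t) * Real.cos (x+t)) * (2 * Real.sin x * Real.cos x) := by
      rw [show 4*x+2*t = 2*(x+t) + 2*x by ring, Real.cos_add, Real.cos_two_mul, Real.cos_two_mul,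
        Real.sin_two_mul, Real.sin_two_mul]
    have e4 : Real.cos (2*t) = (2 * Real.cos (x+t)^2 - 1) * (2 * Real.cos x ^2 - 1)
        + (2 * Real.sin (x+t) * Real.cos (x+t)) * (2 * Real.sin x * Real.cos x) := by
      rw [show 2*t = 2*(x+t) - 2*x by ring, Real.cos_sub, Real.cos_two_mul, Real.cos_two_mul,
        Real.sin_two_mul, Real.sin_two_mul]
    rw [e2, e3, e4, e1]; ring
  have hint : IntervalIntegrable (fun x => Real.cos (x+t)^2 * Real.cos x^2) volume
      (-(Real.pi/2)) (Real.pi/2 - t) := by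
    apply Continuous.intervalIntegrable
    fun_prop
  rw [intervalIntegral.integral_eq_sub_of_hasDerivAt hderiv hint]
  have s1 : Real.sin (2*(Real.pi/2 - t)) = Real.sin (2*t) := by
    rw [show 2*(Real.pi/2 - t) = Real.pi - 2*t by ring, Real.sin_pi_sub]
  have s2 : Real.sin (2*(Real.pi/2 - t) + 2*t) = 0 := by
    rw [show 2*(Real.pi/2 - t) + 2*t = Real.pi by ring, Real.sin_pi]
  have s3 : Real.sin (4*(Real.pi/2 - t) + 2*t) = - Real.sin (2*t) := by
    rw [show 4*(Real.pi/2 - t) + 2*t = -(2*t) + 2*Real.pi by ring, Real.sin_add_two_pi,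
      Real.sin_neg]
  have s4 : Real.sin (2*(-(Real.pi/2))) = 0 := by
    rw [show 2*(-(Real.pi/2)) = -Real.pi by ring, Real.sin_neg, Real.sin_pi, neg_zero]
  have s5 : Real.sin (2*(-(Real.pi/2)) + 2*t) = - Real.sin (2*t) := by
    rw [show 2*(-(Real.pi/2)) + 2*t = -(Real.pi - 2*t) by ring, Real.sin_neg, Real.sin_pi_sub]
  have s6 : Real.sin (4*(-(Real.pi/2)) + 2*t) = Real.sin (2*t) := by
    rw [show 4*(-(Real.pi/2)) + 2*t = 2*t - 2*Real.pi by ring, Real.sin_sub_two_pi]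
  simp only [s1, s2, s3, s4, s5, s6]
  ring

lemma KJ_eq {t : ℝ} (h0 : 0 ≤ t) (h1 : t < Real.pi) :
    KJ t = (Real.pi - t)*Real.cos (2*t)/2 + Real.sin (2*t)/4 := by
  have hsupp : Function.support (fun x => HpowDeriv 2 (x + t) * HpowDeriv 2 x)
      ⊆ Set.Ioc (-(Real.pi/2)) (Real.pi/2 - t) := by
    intro x hx
    simp only [Function.mem_support, ne_eq] at hx
    by_cases hx1 : |x| ≤ Real.pi/2
    · by_cases hx2 : |x + t| ≤ Real.pi/2
      · constructor
        · rcases lt_or_eq_of_le (abs_le.mp hx1).1 with h | h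
          · exact h
          · exfalso; apply hx
            rw [hpd2_eq x, if_pos hx1, ← h]
            simp [Real.cos_pi_div_two]
        · linarith [(abs_le.mp hx2).2]
      · exact absurd (by rw [hpd2_zero hx2, zero_mul]) hx
    · exact absurd (by rw [hpd2_zero hx1, mul_zero]) hx
  rw [KJ, ← intervalIntegral.integral_eq_integral_of_support_subset hsupp]
  have hab : -(Real.pi/2) ≤ Real.pi/2 - t := by linarith
  have hcong : ∀ x ∈ Set.uIcc (-(Real.pi/2)) (Real.pi/2 - t),
      HpowDeriv 2 (x + t) * HpowDeriv 2 x
        = (2 * Real.cos (x+t) * Real.sin (x+t)) * (2 * Real.cos x * Real.sin x) := by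
    intro x hx
    rw [Set.uIcc_of_le hab] at hx
    obtain ⟨hxl, hxr⟩ := hx
    have h1 : |x| ≤ Real.pi/2 := abs_le.mpr ⟨by linarith, by linarith⟩
    have h2 : |x + t| ≤ Real.pi/2 := abs_le.mpr ⟨by linarith, by linarith⟩
    rw [hpd2_eq, hpd2_eq, if_pos h1, if_pos h2]
    ring
  rw [intervalIntegral.integral_congr hcong]
  have hderiv : ∀ x ∈ Set.uIcc (-(Real.pi/2)) (Real.pi/2 - t),
      HasDerivAt (fun x : ℝ => x * Real.cos (2*t)/2 - Real.sin (4*x+2*t)/8)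
      ((2 * Real.cos (x+t) * Real.sin (x+t)) * (2 * Real.cos x * Real.sin x)) x := by
    intro x _
    have h5 : HasDerivAt (fun x : ℝ => x * Real.cos (2*t)/2) (Real.cos (2*t)/2) x := by
      simpa using (((hasDerivAt_id x).mul_const (Real.cos (2*t))).div_const 2)
    have h4 : HasDerivAt (fun x : ℝ => Real.sin (4*x+2*t)/8) (4 * Real.cos (4*x+2*t)/8) x := by
      have hin : HasDerivAt (fun x : ℝ => 4*x+2*t) 4 x := by
        simpa using ((hasDerivAt_id x).const_mul 4).add_const (2*t)
      have := ((Real.hasDerivAt_sin (4*x+2*t)).comp x hin).div_const 8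
      simpa [mul_comm] using this
    have H := h5.sub h4
    refine H.congr_deriv ?_
    have e3 : Real.cos (4*x+2*t) = (2 * Real.cos (x+t)^2 - 1) * (2 * Real.cos x ^2 - 1)
        - (2 * Real.sin (x+t) * Real.cos (x+t)) * (2 * Real.sin x * Real.cos x) := by
      rw [show 4*x+2*t = 2*(x+t) + 2*x by ring, Real.cos_add, Real.cos_two_mul, Real.cos_two_mul,
        Real.sin_two_mul, Real.sin_two_mul]
    have e4 : Real.cos (2*t) = (2 * Real.cos (x+t)^2 - 1) * (2 * Real.cos x ^2 - 1)
        + (2 * Real.sin (x+t) * Real.cos (x+t)) * (2 * Real.sin x * Real.cos x) := by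
      rw [show 2*t = 2*(x+t) - 2*x by ring, Real.cos_sub, Real.cos_two_mul, Real.cos_two_mul,
        Real.sin_two_mul, Real.sin_two_mul]
    rw [e3, e4]; ring
  have hint : IntervalIntegrable
      (fun x => (2 * Real.cos (x+t) * Real.sin (x+t)) * (2 * Real.cos x * Real.sin x)) volume
      (-(Real.pi/2)) (Real.pi/2 - t) := by
    apply Continuous.intervalIntegrable
    fun_prop
  rw [intervalIntegral.integral_eq_sub_of_hasDerivAt hderiv hint]
  have s3 : Real.sin (4*(Real.pi/2 - t) + 2*t) = - Real.sin (2*t) := by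
    rw [show 4*(Real.pi/2 - t) + 2*t = -(2*t) + 2*Real.pi by ring, Real.sin_add_two_pi,
      Real.sin_neg]
  have s6 : Real.sin (4*(-(Real.pi/2)) + 2*t) = Real.sin (2*t) := by
    rw [show 4*(-(Real.pi/2)) + 2*t = 2*t - 2*Real.pi by ring, Real.sin_sub_two_pi]
  simp only [s3, s6]
  ring

lemma prod_zero_of_ge {t x : ℝ} (ht : Real.pi ≤ t) : Hpow 2 (x + t) * Hpow 2 x = 0 := by
  by_cases hx1 : |x| ≤ Real.pi/2
  · by_cases hx2 : |x + t| ≤ Real.pi/2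
    · have hxe : x = -(Real.pi/2) := by
        have := (abs_le.mp hx1).1
        have := (abs_le.mp hx2).2
        linarith
      rw [hpow2_eq x, if_pos hx1, hxe]
      simp [Real.cos_pi_div_two]
    · rw [hpow2_zero hx2, zero_mul]
  · rw [hpow2_zero hx1, mul_zero]

lemma prodD_zero_of_ge {t x : ℝ} (ht : Real.pi ≤ t) : HpowDeriv 2 (x + t) * HpowDeriv 2 x = 0 := by
  by_cases hx1 : |x| ≤ Real.pi/2
  · by_cases hx2 : |x + t| ≤ Real.pi/2
    · have hxe : x = -(Real.pi/2) := by
        have := (abs_le.mp hx1).1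
        have := (abs_le.mp hx2).2
        linarith
      rw [hpd2_eq x, if_pos hx1, hxe]
      simp [Real.cos_pi_div_two]
    · rw [hpd2_zero hx2, zero_mul]
  · rw [hpd2_zero hx1, mul_zero]

lemma Kk_of_ge {t : ℝ} (ht : Real.pi ≤ t) : Kk t = 0 := by
  have h1 : KI t = 0 := by
    rw [KI]
    have : (fun x => Hpow 2 (x + t) * Hpow 2 x) = fun _ => (0:ℝ) :=
      funext fun x => prod_zero_of_ge ht
    rw [this, integral_zero]
  have h2 : KJ t = 0 := by
    rw [KJ]
    have : (fun x => HpowDeriv 2 (x + t) * HpowDeriv 2 x) = fun _ => (0:ℝ) :=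
      funext fun x => prodD_zero_of_ge ht
    rw [this, integral_zero]
  rw [Kk, h1, h2]; ring

lemma Kk_eq {t : ℝ} (h0 : 0 ≤ t) (h1 : t ≤ Real.pi) : Kk t = kfun t := by
  rcases eq_or_lt_of_le h1 with h | h
  · rw [h, Kk_of_ge le_rfl, kfun_pi]
  · rw [Kk, KI_eq h0 h, KJ_eq h0 h, kfun]; ring

lemma shift_prod (f g : ℝ → ℝ) (c d : ℝ) :
    ∫ x : ℝ, f (x + c) * g (x + d) = ∫ x : ℝ, f (x + (c - d)) * g x := by
  have h := integral_add_right_eq_self (μ := volume) (fun y => f (y + (c - d)) * g y) d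
  rw [← h]
  congr 1
  funext x
  rw [show x + d + (c - d) = x + c by ring]

lemma KI_even (t : ℝ) : KI (-t) = KI t := by
  rw [KI, KI]
  have h := shift_prod (Hpow 2) (Hpow 2) 0 t
  simp only [zero_sub] at h
  rw [← h]
  have h2 := shift_prod (Hpow 2) (Hpow 2) t 0
  simp only [sub_zero] at h2
  rw [← h2]
  congr 1; funext x
  rw [add_zero, mul_comm]

lemma KJ_even (t : ℝ) : KJ (-t) = KJ t := by
  rw [KJ, KJ]
  have h := shift_prod (HpowDeriv 2) (HpowDeriv 2) 0 t
  simp only [zero_sub] at h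
  rw [← h]
  have h2 := shift_prod (HpowDeriv 2) (HpowDeriv 2) t 0
  simp only [sub_zero] at h2
  rw [← h2]
  congr 1; funext x
  rw [add_zero, mul_comm]

lemma Kk_even (t : ℝ) : Kk (-t) = Kk t := by
  rw [Kk, Kk, KI_even, KJ_even]

lemma Kk_nonneg (t : ℝ) : 0 ≤ Kk t := by
  rcases le_total 0 t with h | h
  · rcases le_total t Real.pi with h' | h'
    · rw [Kk_eq h h']; exact kfun_nonneg h'
    · rw [Kk_of_ge h']
  · rw [← Kk_even]
    rcases le_total (-t) Real.pi with h' | h'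
    · rw [Kk_eq (by linarith) h']; exact kfun_nonneg h'
    · rw [Kk_of_ge h']

lemma Kk_le_pi (t : ℝ) : Kk t ≤ Real.pi := by
  rcases le_total 0 t with h | h
  · rcases le_total t Real.pi with h' | h'
    · rw [Kk_eq h h']; exact kfun_le_pi h
    · rw [Kk_of_ge h']; positivity
  · rw [← Kk_even]
    rcases le_total (-t) Real.pi with h' | h'
    · rw [Kk_eq (by linarith) h']; exact kfun_le_pi (by linarith)
    · rw [Kk_of_ge h']; positivity

lemma Kk_zero : Kk 0 = Real.pi := by
  rw [Kk_eq le_rfl Real.pi_pos.le, kfun_zero]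

lemma Kk_pair {d d' : ℝ} (hd : 0 ≤ d) (hd' : 0 ≤ d') (hsum : Real.pi ≤ d + d') :
    Kk d + Kk d' ≤ Real.pi := by
  rcases le_or_gt Real.pi d with h | h
  · rw [Kk_of_ge h]; simpa using Kk_le_pi d'
  rcases le_or_gt Real.pi d' with h' | h'
  · rw [Kk_of_ge h']; simpa using Kk_le_pi d
  rw [Kk_eq hd h.le, Kk_eq hd' h'.le]
  have h1 : kfun d' ≤ kfun (Real.pi - d) := kfun_anti (by linarith)
  rw [kfun_reflect] at h1
  linarith

lemma sum_erase_swap (s : Finset ℤ) (G : ℤ → ℤ → ℝ) :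
    ∑ m ∈ s, ∑ n ∈ s.erase m, G m n = ∑ m ∈ s, ∑ n ∈ s.erase m, G n m := by
  classical
  have key : ∀ (G : ℤ → ℤ → ℝ) (m : ℤ),
      ∑ n ∈ s.erase m, G m n = ∑ n ∈ s, if n ≠ m then G m n else 0 := by
    intro G m
    rw [← Finset.sum_filter, Finset.filter_ne' s m]
  calc ∑ m ∈ s, ∑ n ∈ s.erase m, G m n
      = ∑ m ∈ s, ∑ n ∈ s, if n ≠ m then G m n else 0 :=
        Finset.sum_congr rfl fun m _ => key G m
    _ = ∑ n ∈ s, ∑ m ∈ s, if n ≠ m then G m n else 0 := Finset.sum_comm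
    _ = ∑ m ∈ s, ∑ n ∈ s, if n ≠ m then G n m else 0 :=
        Finset.sum_congr rfl fun x _ => Finset.sum_congr rfl fun y _ => by
          by_cases h : x = y
          · simp [h]
          · simp [h, Ne.symm h]
    _ = ∑ m ∈ s, ∑ n ∈ s.erase m, G n m :=
        (Finset.sum_congr rfl fun m _ => key (fun a b => G b a) m).symm

lemma row_bound (lam : ℤ → ℝ) (hmono : StrictMono lam)
    (hgap : ∀ n : ℤ, Real.pi ≤ lam (n + 2) - lam n) (s : Finset ℤ) (m : ℤ) :
    ∑ n ∈ s.erase m, Kk (lam m - lam n) ≤ Real.pi := by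
  classical
  have hvanish : ∀ n ∈ s.erase m, Kk (lam m - lam n) ≠ 0 → n ∈ ({m - 1, m + 1} : Finset ℤ) := by
    intro n hn hK
    by_contra hmem
    simp only [Finset.mem_insert, Finset.mem_singleton] at hmem
    push_neg at hmem
    have hne : n ≠ m := Finset.ne_of_mem_erase hn
    apply hK
    rcases lt_or_gt_of_ne hne with h | h
    · have h2 : n ≤ m - 2 := by omega
      have hg := hgap (m - 2)
      rw [show m - 2 + 2 = m by ring] at hg
      have hle : lam n ≤ lam (m - 2) := hmono.monotone (by omega)
      exact Kk_of_ge (by linarith)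
    · have h2 : m + 2 ≤ n := by omega
      have hg := hgap m
      have hle : lam (m + 2) ≤ lam n := hmono.monotone (by omega)
      rw [show lam m - lam n = -(lam n - lam m) by ring, Kk_even]
      exact Kk_of_ge (by linarith)
  rw [← Finset.sum_filter_of_ne hvanish]
  have hsub : (s.erase m).filter (fun n => n ∈ ({m-1, m+1}:Finset ℤ)) ⊆ ({m-1, m+1}:Finset ℤ) :=
    fun n hn => (Finset.mem_filter.mp hn).2
  calc ∑ n ∈ (s.erase m).filter (fun n => n ∈ ({m-1, m+1}:Finset ℤ)), Kk (lam m - lam n)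
      ≤ ∑ n ∈ ({m-1,m+1}:Finset ℤ), Kk (lam m - lam n) :=
        Finset.sum_le_sum_of_subset_of_nonneg hsub (fun n _ _ => Kk_nonneg _)
    _ = Kk (lam m - lam (m-1)) + Kk (lam m - lam (m+1)) := Finset.sum_pair (by omega)
    _ ≤ Real.pi := by
        rw [show lam m - lam (m+1) = -(lam (m+1) - lam m) by ring, Kk_even]
        have hg := hgap (m-1)
        rw [show m - 1 + 2 = m + 1 by ring] at hg
        exact Kk_pair (by linarith [hmono (show m - 1 < m by omega)])
          (by linarith [hmono (show m < m + 1 by omega)]) (by linarith)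

lemma qform (lam : ℤ → ℝ) (hmono : StrictMono lam)
    (hgap : ∀ n : ℤ, Real.pi ≤ lam (n + 2) - lam n) (s : Finset ℤ) (b : ℤ → ℂ) :
    0 ≤ ∑ m ∈ s, ∑ n ∈ s,
        ((b m).re * (b n).re + (b m).im * (b n).im) * Kk (lam m - lam n) := by
  classical
  set r : ℤ → ℤ → ℝ := fun m n => (b m).re * (b n).re + (b m).im * (b n).im with hr
  set nm : ℤ → ℝ := fun m => (b m).re ^ 2 + (b m).im ^ 2 with hnm
  have hQ : ∑ m ∈ s, ∑ n ∈ s, r m n * Kk (lam m - lam n)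
      = ∑ m ∈ s, (nm m * Real.pi + ∑ n ∈ s.erase m, r m n * Kk (lam m - lam n)) := by
    apply Finset.sum_congr rfl
    intro m hm
    rw [← Finset.add_sum_erase s _ hm]
    congr 1
    rw [sub_self, Kk_zero]
    simp only [hr, hnm]; ring
  have hterm : ∀ m ∈ s, -(∑ n ∈ s.erase m, (nm m / 2 + nm n / 2) * Kk (lam m - lam n))
      ≤ ∑ n ∈ s.erase m, r m n * Kk (lam m - lam n) := by
    intro m _
    rw [← Finset.sum_neg_distrib]
    apply Finset.sum_le_sum
    intro n _
    have h1 : -(nm m / 2 + nm n / 2) ≤ r m n := by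
      simp only [hr, hnm]
      nlinarith [sq_nonneg ((b m).re + (b n).re), sq_nonneg ((b m).im + (b n).im)]
    calc -((nm m / 2 + nm n / 2) * Kk (lam m - lam n))
        = (-(nm m / 2 + nm n / 2)) * Kk (lam m - lam n) := by ring
      _ ≤ r m n * Kk (lam m - lam n) := mul_le_mul_of_nonneg_right h1 (Kk_nonneg _)
  have hS : ∑ m ∈ s, ∑ n ∈ s.erase m, (nm m / 2 + nm n / 2) * Kk (lam m - lam n)
      = ∑ m ∈ s, nm m * ∑ n ∈ s.erase m, Kk (lam m - lam n) := by
    have hsplit : ∀ m, ∑ n ∈ s.erase m, (nm m / 2 + nm n / 2) * Kk (lam m - lam n)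
        = ∑ n ∈ s.erase m, (nm m / 2) * Kk (lam m - lam n)
          + ∑ n ∈ s.erase m, (nm n / 2) * Kk (lam m - lam n) := by
      intro m
      rw [← Finset.sum_add_distrib]
      exact Finset.sum_congr rfl fun n _ => by ring
    simp only [hsplit]
    rw [Finset.sum_add_distrib]
    have hswap := sum_erase_swap s (fun m n => (nm n / 2) * Kk (lam m - lam n))
    rw [hswap]
    have heven : ∀ m n : ℤ, Kk (lam n - lam m) = Kk (lam m - lam n) := by
      intro m n
      rw [show lam n - lam m = -(lam m - lam n) by ring, Kk_even]
    simp only [heven]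
    rw [← Finset.sum_add_distrib]
    apply Finset.sum_congr rfl
    intro m _
    rw [Finset.mul_sum, ← Finset.sum_add_distrib]
    exact Finset.sum_congr rfl fun n _ => by ring
  rw [hQ, Finset.sum_add_distrib]
  have h2 : -(∑ m ∈ s, ∑ n ∈ s.erase m, (nm m / 2 + nm n / 2) * Kk (lam m - lam n))
      ≤ ∑ m ∈ s, ∑ n ∈ s.erase m, r m n * Kk (lam m - lam n) := by
    rw [← Finset.sum_neg_distrib]
    exact Finset.sum_le_sum hterm
  rw [hS] at h2
  have h3 : ∑ m ∈ s, nm m * ∑ n ∈ s.erase m, Kk (lam m - lam n)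
      ≤ ∑ m ∈ s, nm m * Real.pi := by
    apply Finset.sum_le_sum
    intro m _
    have hnmm : 0 ≤ nm m := by simp only [hnm]; positivity
    exact mul_le_mul_of_nonneg_left (row_bound lam hmono hgap s m) hnmm
  linarith

lemma norm_sq_sum (s : Finset ℤ) (b : ℤ → ℂ) (c : ℤ → ℝ) :
    ‖∑ n ∈ s, b n * ((c n : ℝ) : ℂ)‖ ^ 2
      = ∑ m ∈ s, ∑ n ∈ s,
          ((b m).re * (b n).re + (b m).im * (b n).im) * (c m * c n) := by
  have hre : (∑ n ∈ s, b n * ((c n : ℝ) : ℂ)).re = ∑ n ∈ s, (b n).re * c n := by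
    rw [Complex.re_sum]
    exact Finset.sum_congr rfl fun n _ => by simp [Complex.mul_re]
  have him : (∑ n ∈ s, b n * ((c n : ℝ) : ℂ)).im = ∑ n ∈ s, (b n).im * c n := by
    rw [Complex.im_sum]
    exact Finset.sum_congr rfl fun n _ => by simp [Complex.mul_im]
  have hnorm : ‖∑ n ∈ s, b n * ((c n : ℝ) : ℂ)‖ ^ 2
      = (∑ n ∈ s, (b n).re * c n) ^ 2 + (∑ n ∈ s, (b n).im * c n) ^ 2 := by
    rw [← hre, ← him, Complex.sq_norm, Complex.normSq_apply]
    ring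
  rw [hnorm, sq, sq, Finset.sum_mul_sum, Finset.sum_mul_sum, ← Finset.sum_add_distrib]
  apply Finset.sum_congr rfl
  intro m _
  rw [← Finset.sum_add_distrib]
  exact Finset.sum_congr rfl fun n _ => by ring

lemma integral_expand (s : Finset ℤ) (b : ℤ → ℂ) (lam : ℤ → ℝ) (f : ℝ → ℝ)
    (hf : Continuous f) (hcf : HasCompactSupport f) :
    ∫ x : ℝ, ‖∑ n ∈ s, b n * ((f (x + lam n) : ℝ) : ℂ)‖ ^ 2
      = ∑ m ∈ s, ∑ n ∈ s, ((b m).re * (b n).re + (b m).im * (b n).im)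
          * ∫ x : ℝ, f (x + (lam m - lam n)) * f x := by
  have hint : ∀ m n : ℤ, Integrable (fun x =>
      ((b m).re * (b n).re + (b m).im * (b n).im) * (f (x + lam m) * f (x + lam n))) :=
    fun m n => (int_prod f f hf hf hcf (lam m) (lam n)).const_mul _
  calc ∫ x : ℝ, ‖∑ n ∈ s, b n * ((f (x + lam n) : ℝ) : ℂ)‖ ^ 2
      = ∫ x : ℝ, ∑ m ∈ s, ∑ n ∈ s, ((b m).re * (b n).re + (b m).im * (b n).im)
          * (f (x + lam m) * f (x + lam n)) := by
        congr 1
        funext x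
        exact norm_sq_sum s b (fun n => f (x + lam n))
    _ = ∑ m ∈ s, ∫ x : ℝ, ∑ n ∈ s, ((b m).re * (b n).re + (b m).im * (b n).im)
          * (f (x + lam m) * f (x + lam n)) := by
        apply integral_finset_sum
        intro m _
        exact integrable_finset_sum s (fun n _ => hint m n)
    _ = ∑ m ∈ s, ∑ n ∈ s, ∫ x : ℝ, ((b m).re * (b n).re + (b m).im * (b n).im)
          * (f (x + lam m) * f (x + lam n)) := by
        exact Finset.sum_congr rfl fun m _ => integral_finset_sum s (fun n _ => hint m n)
    _ = ∑ m ∈ s, ∑ n ∈ s, ((b m).re * (b n).re + (b m).im * (b n).im)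
          * ∫ x : ℝ, f (x + lam m) * f (x + lam n) := by
        exact Finset.sum_congr rfl fun m _ => Finset.sum_congr rfl fun n _ =>
          integral_const_mul _ _
    _ = ∑ m ∈ s, ∑ n ∈ s, ((b m).re * (b n).re + (b m).im * (b n).im)
          * ∫ x : ℝ, f (x + (lam m - lam n)) * f x := by
        exact Finset.sum_congr rfl fun m _ => Finset.sum_congr rfl fun n _ => by
          rw [shift_prod]

theorem stmt17 (lam : ℤ → ℝ) (hmono : StrictMono lam)
    (hgap : ∀ n : ℤ, Real.pi ≤ lam (n + 2) - lam n)
    (a : ℤ → ℂ) (ha : (Function.support a).Finite) :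
    ∫ x : ℝ, ‖∑ᶠ n : ℤ, a n * (HpowDeriv 2 (x + lam n) : ℂ)‖ ^ 2 ≤
      4 * ∫ x : ℝ, ‖∑ᶠ n : ℤ, a n * (Hpow 2 (x + lam n) : ℂ)‖ ^ 2 := by
  classical
  set s : Finset ℤ := ha.toFinset with hs
  have hGf : ∀ (f : ℝ → ℝ) (x : ℝ),
      (∑ᶠ n : ℤ, a n * ((f (x + lam n) : ℝ) : ℂ))
        = ∑ n ∈ s, a n * ((f (x + lam n) : ℝ) : ℂ) := by
    intro f x
    apply finsum_eq_sum_of_support_subset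
    intro n hn
    rw [Function.mem_support] at hn
    rw [hs, Set.Finite.coe_toFinset]
    exact left_ne_zero_of_mul hn
  have hI1 : ∫ x : ℝ, ‖∑ᶠ n : ℤ, a n * (HpowDeriv 2 (x + lam n) : ℂ)‖ ^ 2
      = ∑ m ∈ s, ∑ n ∈ s, ((a m).re * (a n).re + (a m).im * (a n).im)
          * KJ (lam m - lam n) := by
    rw [show (fun x : ℝ => ‖∑ᶠ n : ℤ, a n * (HpowDeriv 2 (x + lam n) : ℂ)‖ ^ 2)
        = fun x : ℝ => ‖∑ n ∈ s, a n * ((HpowDeriv 2 (x + lam n) : ℝ) : ℂ)‖ ^ 2 from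
      funext fun x => by rw [hGf (HpowDeriv 2) x]]
    exact integral_expand s a lam (HpowDeriv 2) cont_hpd2 hcs_hpd2
  have hI2 : ∫ x : ℝ, ‖∑ᶠ n : ℤ, a n * (Hpow 2 (x + lam n) : ℂ)‖ ^ 2
      = ∑ m ∈ s, ∑ n ∈ s, ((a m).re * (a n).re + (a m).im * (a n).im)
          * KI (lam m - lam n) := by
    rw [show (fun x : ℝ => ‖∑ᶠ n : ℤ, a n * (Hpow 2 (x + lam n) : ℂ)‖ ^ 2)
        = fun x : ℝ => ‖∑ n ∈ s, a n * ((Hpow 2 (x + lam n) : ℝ) : ℂ)‖ ^ 2 from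
      funext fun x => by rw [hGf (Hpow 2) x]]
    exact integral_expand s a lam (Hpow 2) cont_hpow2 hcs_hpow2
  rw [hI1, hI2]
  have hq := qform lam hmono hgap s a
  have expand : ∑ m ∈ s, ∑ n ∈ s, ((a m).re * (a n).re + (a m).im * (a n).im)
        * Kk (lam m - lam n)
      = 4 * (∑ m ∈ s, ∑ n ∈ s, ((a m).re * (a n).re + (a m).im * (a n).im)
          * KI (lam m - lam n))
        - ∑ m ∈ s, ∑ n ∈ s, ((a m).re * (a n).re + (a m).im * (a n).im)
          * KJ (lam m - lam n) := by
    rw [Finset.mul_sum, ← Finset.sum_sub_distrib]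
    apply Finset.sum_congr rfl
    intro m _
    rw [Finset.mul_sum, ← Finset.sum_sub_distrib]
    apply Finset.sum_congr rfl
    intro n _
    rw [Kk]; ring
  linarith
end
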